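/- arXiv:2309.15458 — 2 statements merged into one kernel-verified Lean document; each statement's English description precedes it below -/
import Mathlib

section
/- Let φ_f : {0,1}^L → {0,1} be the indicator of a clause with negation pattern n (φ_f(v) = 0 iff v_j = n_j for all j). For independent marginals Q_j on {0,1} and any index i, define the vanilla message M(v_i) = ∑_{v_{-i}} φ_f(v_i, v_{-i}) ∏_{j≠i} Q_j(v_j) and the simplified message M'(v_i) = 1[v_i = ¬n_i] · ∏_{j≠i} Q_j(n_j). Then M(v_i) - M'(v_i) is a constant independent of v_i; consequently softmax(φ_u + w·M) = softmax(φ_u + w·M') for any unary potential φ_u : {0,1} → ℝ and weight w ∈ ℝ. -/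
open Finset

/-- The vanilla clause message and the simplified (true-premise) message differ
by a constant in `v_i`; hence they give the same softmax-normalized update. -/
theorem clause_message_simplification (L : ℕ) (n : Fin L → Bool)
    (Q : Fin L → Bool → ℝ)
    (hQsum : ∀ j, Q j false + Q j true = 1) (hQpos : ∀ j b, 0 ≤ Q j b)
    (i : Fin L) (M M' : Bool → ℝ)
    (hM : ∀ b, M b = ∑ v : Fin L → Bool,
      if v i = b then
        (if v = n then (0 : ℝ) else 1) * ∏ j ∈ Finset.univ.erase i, Q j (v j)
      else 0)
    (hM' : ∀ b, M' b
      = (if b = !(n i) then (1 : ℝ) else 0) * ∏ j ∈ Finset.univ.erase i, Q j (n j)) :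
    (∃ c, ∀ b, M b - M' b = c)
    ∧ ∀ (φu : Bool → ℝ) (w : ℝ) (b : Bool),
        Real.exp (φu b + w * M b) / (∑ b' : Bool, Real.exp (φu b' + w * M b'))
          = Real.exp (φu b + w * M' b)
            / (∑ b' : Bool, Real.exp (φu b' + w * M' b')) := by
  set P : ℝ := ∏ j ∈ Finset.univ.erase i, Q j (n j) with hPdef
  have key : ∀ b, M b - M' b = 1 - P := by
    intro b
    -- the unconstrained sum equals 1
    have h1 : (∑ v : Fin L → Bool,
        if v i = b then ∏ j ∈ Finset.univ.erase i, Q j (v j) else 0) = 1 := by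
      have hps := Finset.prod_univ_sum (fun _ : Fin L => (Finset.univ : Finset Bool))
        (fun j x => if j = i then (if x = b then (1:ℝ) else 0) else Q j x)
      rw [Fintype.piFinset_univ] at hps
      have hRHS : ∀ v : Fin L → Bool,
          (∏ j : Fin L, if j = i then (if v j = b then (1:ℝ) else 0) else Q j (v j))
            = if v i = b then ∏ j ∈ Finset.univ.erase i, Q j (v j) else 0 := by
        intro v
        rw [← Finset.prod_erase_mul Finset.univ _ (Finset.mem_univ i)]
        have hrest : (∏ j ∈ Finset.univ.erase i,
            (if j = i then (if v j = b then (1:ℝ) else 0) else Q j (v j)))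
              = ∏ j ∈ Finset.univ.erase i, Q j (v j) :=
          Finset.prod_congr rfl (fun j hj => by simp [Finset.ne_of_mem_erase hj])
        rw [hrest]
        by_cases h : v i = b <;> simp [h]
      have hLHS : (∏ j : Fin L, ∑ x : Bool,
          (if j = i then (if x = b then (1:ℝ) else 0) else Q j x)) = 1 := by
        apply Finset.prod_eq_one
        intro j _
        by_cases h : j = i
        · subst h; cases b <;> simp
        · simp only [h, if_false]
          rw [Fintype.sum_bool]
          linarith [hQsum j]
      calc (∑ v : Fin L → Bool,
              if v i = b then ∏ j ∈ Finset.univ.erase i, Q j (v j) else 0)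
          = ∑ v : Fin L → Bool, ∏ j : Fin L,
              (if j = i then (if v j = b then (1:ℝ) else 0) else Q j (v j)) := by
            exact Finset.sum_congr rfl (fun v _ => (hRHS v).symm)
        _ = ∏ j : Fin L, ∑ x : Bool,
              (if j = i then (if x = b then (1:ℝ) else 0) else Q j x) := hps.symm
        _ = 1 := hLHS
    -- the correction term
    have h2 : (∑ v : Fin L → Bool,
        if v i = b then (if v = n then (∏ j ∈ Finset.univ.erase i, Q j (v j)) else 0) else 0)
          = if b = n i then P else 0 := by
      have : ∀ v : Fin L → Bool,
          (if v i = b then (if v = n then (∏ j ∈ Finset.univ.erase i, Q j (v j)) else 0) else 0)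
            = if v = n then (if b = n i then P else 0) else 0 := by
        intro v
        by_cases hv : v = n
        · subst hv
          by_cases h : v i = b
          · simp [← h, hPdef]
          · simp [h, Ne.symm h]
        · simp [hv]
      rw [Finset.sum_congr rfl (fun v _ => this v)]
      simp
    have hsplit : ∀ v : Fin L → Bool,
        (if v i = b then (if v = n then (0:ℝ) else 1) * ∏ j ∈ Finset.univ.erase i, Q j (v j) else 0)
          = (if v i = b then ∏ j ∈ Finset.univ.erase i, Q j (v j) else 0)
            - (if v i = b then (if v = n then (∏ j ∈ Finset.univ.erase i, Q j (v j)) else 0) else 0) := by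
      intro v
      by_cases h : v i = b <;> by_cases h2 : v = n <;> simp [h, h2]
    rw [hM b, hM' b, Finset.sum_congr rfl (fun v _ => hsplit v), Finset.sum_sub_distrib, h1, h2]
    cases b <;> cases hni : n i <;> simp [hni, ← hPdef] <;> ring
  refine ⟨⟨1 - P, key⟩, ?_⟩
  intro φu w b
  have he : ∀ b', Real.exp (φu b' + w * M b')
      = Real.exp (w * (1 - P)) * Real.exp (φu b' + w * M' b') := by
    intro b'
    rw [← Real.exp_add]
    have hMb : M b' = M' b' + (1 - P) := by have := key b'; linarith
    rw [hMb]; ring_nf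
  rw [he b, Fintype.sum_bool, Fintype.sum_bool, he true, he false, ← mul_add]
  rw [mul_div_mul_left]
  exact (Real.exp_pos _).ne'
end

section
/- Complexity reduction count: for a clause of length L over binary variables, the vanilla grounding-message computation ∑_{v_{-i}} φ(v_i, v_{-i}) ∏_{j≠i} Q_j(v_j) sums over exactly 2^{L-1} assignments, while the simplified message 1[v_i = ¬n_i] ∏_{j≠i} Q_j(n_j) is a product of exactly L-1 factors; both produce distributions equal after softmax normalization with any unary potential. -/
open Finset

/-- Complexity reduction count: the vanilla clause message sums over exactly
`2^(L-1)` assignments to the other coordinates, while the simplified message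
is a product of exactly `L-1` factors; both yield the same distribution after
softmax normalization with any unary potential. -/
theorem complexity_reduction_count (L : ℕ) (hL : 1 ≤ L) (n : Fin L → Bool)
    (i : Fin L) (Q : Fin L → Bool → ℝ)
    (hQsum : ∀ j, Q j false + Q j true = 1) (hQpos : ∀ j b, 0 ≤ Q j b)
    (M M' : Bool → ℝ)
    (hM : ∀ b, M b = ∑ v : Fin L → Bool,
      if v i = b then
        (if v = n then (0 : ℝ) else 1) * ∏ j ∈ Finset.univ.erase i, Q j (v j)
      else 0)
    (hM' : ∀ b, M' b = (if b = !(n i) then (1 : ℝ) else 0)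
        * ∏ j ∈ Finset.univ.erase i, Q j (n j)) :
    Fintype.card ({j // j ∈ Finset.univ.erase i} → Bool) = 2 ^ (L - 1)
    ∧ (Finset.univ.erase i).card = L - 1
    ∧ ∀ (φu : Bool → ℝ) (wt : ℝ) (b : Bool),
        Real.exp (φu b + wt * M b)
            / (∑ b' : Bool, Real.exp (φu b' + wt * M b'))
          = Real.exp (φu b + wt * M' b)
            / (∑ b' : Bool, Real.exp (φu b' + wt * M' b')) := by
  have hcard : (Finset.univ.erase i).card = L - 1 := by
    rw [Finset.card_erase_of_mem (Finset.mem_univ i), Finset.card_univ, Fintype.card_fin]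
  refine ⟨by simp [Fintype.card_fun, Fintype.card_coe, hcard], hcard, ?_⟩
  set P : ℝ := ∏ j ∈ Finset.univ.erase i, Q j (n j) with hP
  set X : (Fin L → Bool) → ℝ := fun v => ∏ j ∈ Finset.univ.erase i, Q j (v j) with hX
  -- sum over assignments with a fixed value at i is 1
  have hS : ∀ b : Bool, (∑ v : Fin L → Bool, if v i = b then X v else 0) = 1 := by
    intro b
    have e := Equiv.funSplitAt i Bool
    rw [← Equiv.sum_comp (Equiv.funSplitAt i Bool).symm
      (fun v => if v i = b then X v else 0), Fintype.sum_prod_type]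
    have hval : ∀ (a : Bool) (g : {j // j ≠ i} → Bool),
        ((Equiv.funSplitAt i Bool).symm (a, g)) i = a := by
      intro a g; simp [Equiv.funSplitAt, Equiv.piSplitAt]
    have hXval : ∀ (a : Bool) (g : {j // j ≠ i} → Bool),
        X ((Equiv.funSplitAt i Bool).symm (a, g))
          = ∏ j : {j // j ≠ i}, Q j (g j) := by
      intro a g
      simp only [hX]
      rw [Finset.prod_subtype (Finset.univ.erase i) (p := fun j => j ≠ i)
        (by intro x; simp)]
      refine Finset.prod_congr rfl fun j _ => ?_
      congr 1
      simp [Equiv.funSplitAt, Equiv.piSplitAt, j.2]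
    have : ∀ a : Bool, (∑ g : {j // j ≠ i} → Bool,
        if ((Equiv.funSplitAt i Bool).symm (a, g)) i = b
        then X ((Equiv.funSplitAt i Bool).symm (a, g)) else 0)
        = if a = b then 1 else 0 := by
      intro a
      by_cases hab : a = b
      · subst hab
        simp only [hval, if_pos rfl, if_true]
        rw [Finset.sum_congr rfl fun g _ => hXval a g]
        rw [← Fintype.piFinset_univ, ← Finset.prod_univ_sum]
        refine Finset.prod_eq_one fun j _ => ?_
        rw [Fintype.sum_bool, add_comm]
        exact hQsum j
      · simp [hval, hab]
    rw [Finset.sum_congr rfl fun a _ => this a]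
    simp
  -- compute second (error) term
  have hErr : ∀ b : Bool, (∑ v : Fin L → Bool,
      if v = n then (if v i = b then X v else 0) else 0)
      = if n i = b then P else 0 := by
    intro b
    rw [Finset.sum_ite_eq' Finset.univ n (fun v => if v i = b then X v else 0)]
    simp [hX, hP]
  -- M in closed form
  have hMval : ∀ b : Bool, M b = 1 - (if n i = b then P else 0) := by
    intro b
    rw [hM b]
    have hterm : ∀ v : Fin L → Bool,
        (if v i = b then (if v = n then (0 : ℝ) else 1) * X v else 0)
        = (if v i = b then X v else 0)
          - (if v = n then (if v i = b then X v else 0) else 0) := by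
      intro v
      by_cases h1 : v = n <;> by_cases h2 : v i = b <;> simp [h1, h2]
    rw [Finset.sum_congr rfl fun v _ => hterm v, Finset.sum_sub_distrib, hS, hErr]
  -- M = M' + constant
  have hMM : ∀ b : Bool, M b = M' b + (1 - P) := by
    intro b
    rw [hMval, hM' b]
    by_cases h : n i = b
    · have : ¬ (b = !(n i)) := by rw [← h]; simp
      simp [h, this]
    · have hb : b = !(n i) := by
        cases b <;> cases hni : n i <;> simp_all
      simp [h, hb]
  intro φu wt b
  have hexp : ∀ b', Real.exp (φu b' + wt * M b')
      = Real.exp (φu b' + wt * M' b') * Real.exp (wt * (1 - P)) := by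
    intro b'; rw [← Real.exp_add]; congr 1; rw [hMM]; ring
  rw [hexp]
  have hden : (∑ b' : Bool, Real.exp (φu b' + wt * M b'))
      = (∑ b' : Bool, Real.exp (φu b' + wt * M' b')) * Real.exp (wt * (1 - P)) := by
    rw [Finset.sum_mul]; exact Finset.sum_congr rfl fun b' _ => hexp b'
  rw [hden, mul_div_mul_right _ _ (Real.exp_ne_zero _)]
end
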